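/- Let X be a Banach space, {x_n} ⊂ X a co-frame and {y_n} ⊂ X* a frame. Then there exists a bounded invertible operator T : X* → X* such that {T y_n} is an alternate dual frame for {x_n} if and only if the operator V : X* → X* defined by Vy = Σ_n y(x_n) y_n is bounded and invertible. -/

import Mathlib

set_option maxHeartbeats 1000000

open Filter Topology

theorem stmt10 {X W : Type*} [NormedAddCommGroup X] [NormedSpace ℂ X] [CompleteSpace X]
    [NormedAddCommGroup W] [NormedSpace ℂ W] [CompleteSpace W]
    (ι : W →ₗ[ℂ] (ℕ → ℂ)) (hι : Function.Injective ι)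
    (e : ℕ → W) (he : ∀ n, ι (e n) = fun j => if n = j then (1 : ℂ) else 0)
    (hbasis : ∀ a : W, HasSum (fun n => ι a n • e n) a)
    (x : ℕ → X) (y : ℕ → (X →L[ℂ] ℂ))
    -- {y_n} is a frame:
    (R : X → W) (hR : ∀ (v : X) (n : ℕ), ι (R v) n = y n v)
    (A B : ℝ) (hA : 0 < A) (hB : 0 < B)
    (hframe : ∀ v : X, A * ‖v‖ ≤ ‖R v‖ ∧ ‖R v‖ ≤ B * ‖v‖)
    -- {x_n} is a co-frame:
    (Rc : (X →L[ℂ] ℂ) → (W →L[ℂ] ℂ))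
    (hRc : ∀ (g : X →L[ℂ] ℂ) (n : ℕ), Rc g (e n) = g (x n))
    (At Bt : ℝ) (hAt : 0 < At) (hBt : 0 < Bt)
    (hcoframe : ∀ g : X →L[ℂ] ℂ, At * ‖g‖ ≤ ‖Rc g‖ ∧ ‖Rc g‖ ≤ Bt * ‖g‖) :
    (∃ T : (X →L[ℂ] ℂ) ≃L[ℂ] (X →L[ℂ] ℂ),
      -- {T y_n} is a frame:
      (∃ R' : X → W,
        (∀ (v : X) (n : ℕ), ι (R' v) n = T (y n) v) ∧
        ∃ A' B' : ℝ, 0 < A' ∧ 0 < B' ∧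
          ∀ v : X, A' * ‖v‖ ≤ ‖R' v‖ ∧ ‖R' v‖ ≤ B' * ‖v‖) ∧
      -- and it is alternate dual for {x_n}:
      (∀ g : X →L[ℂ] ℂ, HasSum (fun n => g (x n) • T (y n)) g)) ↔
    (∃ V : (X →L[ℂ] ℂ) ≃L[ℂ] (X →L[ℂ] ℂ),
      ∀ g : X →L[ℂ] ℂ, HasSum (fun n => g (x n) • y n) (V g)) := by
  have hsep : ∀ a : X, (∀ g : X →L[ℂ] ℂ, g a = 0) → a = 0 := fun a h =>
    NormedSpace.eq_zero_of_forall_dual_eq_zero ℂ h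
  constructor
  · rintro ⟨T, -, hdual⟩
    refine ⟨T.symm, fun g => ?_⟩
    have h1 := ((T.symm : (X →L[ℂ] ℂ) →L[ℂ] (X →L[ℂ] ℂ))).hasSum (hdual g)
    simpa using h1
  · rintro ⟨V, hV⟩
    set VL := (V : (X →L[ℂ] ℂ) →L[ℂ] (X →L[ℂ] ℂ)) with hVLdef
    set VsL := (V.symm : (X →L[ℂ] ℂ) →L[ℂ] (X →L[ℂ] ℂ)) with hVsLdef
    have hVpt : ∀ (g : X →L[ℂ] ℂ) (v : X),
        HasSum (fun n => g (x n) * y n v) (V g v) := by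
      intro g v
      have h1 := (NormedSpace.inclusionInDoubleDual ℂ X v).hasSum (hV g)
      simpa [NormedSpace.dual_def] using h1
    -- existence of the synthesis vector  u v = ∑ y n v • x n
    have hUex : ∀ v : X, ∃ u : X, HasSum (fun n => y n v • x n) u := by
      intro v
      set li := NormedSpace.inclusionInDoubleDualLi ℂ (E := X) with hli
      set s : Finset ℕ → X := fun F => ∑ n ∈ F, y n v • x n with hs
      set t : Finset ℕ → W := fun F => ∑ n ∈ F, ι (R v) n • e n with hts
      have key : ∀ (F : Finset ℕ) (g : X →L[ℂ] ℂ), g (s F) = Rc g (t F) := by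
        intro F g
        simp only [hs, hts]
        rw [map_sum, map_sum]
        refine Finset.sum_congr rfl fun n _ => ?_
        rw [map_smul, map_smul, hRc, hR]
      have hVRc : ∀ g : X →L[ℂ] ℂ, V g v = Rc g (R v) := by
        intro g
        have h1 : HasSum (fun n => ι (R v) n * g (x n)) (Rc g (R v)) := by
          have h2 := (Rc g).hasSum (hbasis (R v))
          simpa [smul_eq_mul, hRc] using h2
        exact (hVpt g v).unique (by simpa [hR, mul_comm] using h1)
      have hest : ∀ F : Finset ℕ, ‖li (s F) - VL.flip v‖ ≤ Bt * ‖t F - R v‖ := by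
        intro F
        refine ContinuousLinearMap.opNorm_le_bound _ (by positivity) fun g => ?_
        have heq : (li (s F) - VL.flip v) g = Rc g (t F - R v) := by
          simp only [ContinuousLinearMap.sub_apply, map_sub]
          have h1 : li (s F) g = g (s F) := rfl
          have h2 : VL.flip v g = V g v := rfl
          rw [h1, h2, key F g, hVRc g]
        rw [heq]
        calc ‖Rc g (t F - R v)‖ ≤ ‖Rc g‖ * ‖t F - R v‖ := (Rc g).le_opNorm _
          _ ≤ (Bt * ‖g‖) * ‖t F - R v‖ :=
              mul_le_mul_of_nonneg_right (hcoframe g).2 (norm_nonneg _)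
          _ = Bt * ‖t F - R v‖ * ‖g‖ := by ring
      have ht0 : Tendsto (fun F : Finset ℕ => Bt * ‖t F - R v‖) atTop (𝓝 0) := by
        have h1 : Tendsto t atTop (𝓝 (R v)) := hbasis (R v)
        have h2 := (tendsto_iff_norm_sub_tendsto_zero.mp h1).const_mul Bt
        simpa using h2
      have hΦ : Tendsto (fun F => li (s F)) atTop (𝓝 (VL.flip v)) := by
        refine (tendsto_iff_norm_sub_tendsto_zero (E := StrongDual ℂ (StrongDual ℂ X))).mpr ?_
        exact squeeze_zero (fun F => norm_nonneg (E := StrongDual ℂ (StrongDual ℂ X)) _) hest ht0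
      have hcs : CauchySeq fun F => li (s F) := hΦ.cauchySeq
      have hcs2 : CauchySeq s := by
        have h3 := (li.isometry.isUniformInducing.cauchy_map_iff
          (F := Filter.map s atTop)).mp ?_
        · exact h3
        · rw [Filter.map_map]
          exact hcs
      obtain ⟨u, hu⟩ := cauchySeq_tendsto_of_complete hcs2
      exact ⟨u, hu⟩
    choose u hu using hUex
    have hgu : ∀ (v : X) (g : X →L[ℂ] ℂ), g (u v) = V g v := by
      intro v g
      have h1 := g.hasSum (hu v)
      have h1' : HasSum (fun n => g (x n) * y n v) (g (u v)) := by
        simpa [smul_eq_mul, mul_comm] using h1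
      exact h1'.unique (hVpt g v)
    have hadd : ∀ a b : X, u (a + b) = u a + u b := by
      intro a b
      have h1 : ∀ g : X →L[ℂ] ℂ, g (u (a + b) - (u a + u b)) = 0 := by
        intro g
        simp [map_sub, map_add, hgu]
      have h2 := hsep _ h1
      exact sub_eq_zero.mp h2
    have hsmul : ∀ (c : ℂ) (a : X), u (c • a) = c • u a := by
      intro c a
      have h1 : ∀ g : X →L[ℂ] ℂ, g (u (c • a) - c • u a) = 0 := by
        intro g
        simp [map_sub, map_smul, hgu]
      have h2 := hsep _ h1
      exact sub_eq_zero.mp h2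
    set Ulin : X →ₗ[ℂ] X :=
      { toFun := u, map_add' := hadd, map_smul' := hsmul } with hUlin
    have hubound : ∀ v : X, ‖Ulin v‖ ≤ ‖VL‖ * ‖v‖ := by
      intro v
      refine NormedSpace.norm_le_dual_bound ℂ _ (by positivity) fun g => ?_
      have h1 : g (u v) = V g v := hgu v g
      calc ‖g (u v)‖ = ‖V g v‖ := by rw [h1]
        _ ≤ ‖V g‖ * ‖v‖ := (V g).le_opNorm v
        _ ≤ (‖VL‖ * ‖g‖) * ‖v‖ :=
            mul_le_mul_of_nonneg_right (VL.le_opNorm g) (norm_nonneg _)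
        _ = ‖VL‖ * ‖v‖ * ‖g‖ := by ring
    set U : X →L[ℂ] X := Ulin.mkContinuous ‖VL‖ hubound with hUdef
    have hUg : ∀ (g : X →L[ℂ] ℂ) (v : X), g (U v) = V g v := fun g v => hgu v g
    have hker : LinearMap.ker (U : X →ₗ[ℂ] X) = ⊥ := by
      rw [LinearMap.ker_eq_bot']
      intro v hv
      refine hsep v fun h => ?_
      have h1 : (V.symm h) (U v) = V (V.symm h) v := hUg (V.symm h) v
      rw [show U v = 0 from hv] at h1
      simp only [map_zero] at h1
      have h2 : V (V.symm h) = h := V.apply_symm_apply h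
      rw [h2] at h1
      exact h1.symm
    have hlow : ∀ v : X, ‖v‖ ≤ ‖VsL‖ * ‖U v‖ := by
      intro v
      refine NormedSpace.norm_le_dual_bound ℂ _ (by positivity) fun h => ?_
      have h1 : (V.symm h) (U v) = V (V.symm h) v := hUg (V.symm h) v
      have h2 : V (V.symm h) = h := V.apply_symm_apply h
      rw [h2] at h1
      calc ‖h v‖ = ‖(V.symm h) (U v)‖ := by rw [h1]
        _ ≤ ‖V.symm h‖ * ‖U v‖ := (V.symm h).le_opNorm _
        _ ≤ (‖VsL‖ * ‖h‖) * ‖U v‖ :=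
            mul_le_mul_of_nonneg_right (VsL.le_opNorm h) (norm_nonneg _)
        _ = ‖VsL‖ * ‖U v‖ * ‖h‖ := by ring
    have hclosed : IsClosed ((LinearMap.range (U : X →ₗ[ℂ] X) : Submodule ℂ X) : Set X) := by
      have hanti : AntilipschitzWith (‖VsL‖.toNNReal) U :=
        U.antilipschitz_of_bound fun v => by
          rw [show ((‖VsL‖.toNNReal : NNReal) : ℝ) = ‖VsL‖ from Real.coe_toNNReal _ (norm_nonneg VsL)]; exact hlow v
      have h1 := hanti.isClosed_range U.uniformContinuous
      simpa [LinearMap.coe_range] using h1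
    have hrange : LinearMap.range (U : X →ₗ[ℂ] X) = ⊤ := by
      by_contra hne
      rw [Submodule.eq_top_iff'] at hne
      push_neg at hne
      obtain ⟨x₀, hx₀⟩ := hne
      set p : Submodule ℂ X := LinearMap.range (U : X →ₗ[ℂ] X) with hp
      haveI : IsClosed (p : Set X) := hclosed
      have hmkne : (Submodule.Quotient.mk x₀ : X ⧸ p) ≠ 0 := by
        simpa [Submodule.Quotient.mk_eq_zero] using hx₀
      obtain ⟨φ, hφ1, hφ2⟩ := exists_dual_vector ℂ (Submodule.Quotient.mk x₀ : X ⧸ p) (norm_ne_zero_iff.mpr hmkne)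
      set q : X →L[ℂ] (X ⧸ p) := LinearMap.mkContinuous p.mkQ 1
        (fun m => by simpa using Submodule.Quotient.norm_mk_le p m) with hq
      set f : X →L[ℂ] ℂ := φ.comp q with hf
      have hVf : V f = 0 := by
        ext v
        have h0 : (Submodule.Quotient.mk (U v) : X ⧸ p) = 0 :=
          (Submodule.Quotient.mk_eq_zero p).mpr ⟨v, rfl⟩
        have h1 : f (U v) = 0 := by
          have : f (U v) = φ (Submodule.Quotient.mk (U v) : X ⧸ p) := rfl
          rw [this, h0, map_zero]
        rw [hUg f v] at h1
        simpa only [ContinuousLinearMap.zero_apply] using h1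
      have hf0 : f = 0 := by
        have h1 := congrArg V.symm hVf
        simpa only [ContinuousLinearEquiv.symm_apply_apply, map_zero] using h1
      have h2 : f x₀ = 0 := by rw [hf0]; simp only [ContinuousLinearMap.zero_apply]
      have h3 : f x₀ = φ (Submodule.Quotient.mk x₀ : X ⧸ p) := rfl
      rw [h3, hφ2] at h2
      have h4 : ‖(Submodule.Quotient.mk x₀ : X ⧸ p)‖ = 0 := by simpa using h2
      exact hmkne (norm_eq_zero.mp h4)
    set eU : X ≃L[ℂ] X := ContinuousLinearEquiv.ofBijective U hker hrange with heU
    have heUc : ∀ v : X, eU v = U v := fun v => rfl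
    set T : (X →L[ℂ] ℂ) ≃L[ℂ] (X →L[ℂ] ℂ) :=
      eU.arrowCongr (ContinuousLinearEquiv.refl ℂ ℂ) with hT
    have hTg : ∀ (g : X →L[ℂ] ℂ) (v : X), T g v = g (eU.symm v) := by
      intro g v
      simp [hT]
    have hTV : ∀ g : X →L[ℂ] ℂ, T (V g) = g := by
      intro g
      ext v
      rw [hTg]
      have h1 : (V g) (eU.symm v) = g (U (eU.symm v)) := (hUg g (eU.symm v)).symm
      rw [h1, ← heUc (eU.symm v), eU.apply_symm_apply]
    refine ⟨T, ⟨⟨fun v => R (eU.symm v), ?_, ?_⟩, ?_⟩⟩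
    · intro v n
      rw [hR, hTg]
    · set S := (eU.symm : X →L[ℂ] X) with hS
      refine ⟨A / (‖(U : X →L[ℂ] X)‖ + 1), B * (‖S‖ + 1), by positivity, by positivity, ?_⟩
      intro v
      have hv1 : ‖v‖ ≤ (‖(U : X →L[ℂ] X)‖ + 1) * ‖eU.symm v‖ := by
        have h1 : v = U (eU.symm v) := by rw [← heUc (eU.symm v), eU.apply_symm_apply]
        calc ‖v‖ = ‖U (eU.symm v)‖ := by rw [← h1]
          _ ≤ ‖(U : X →L[ℂ] X)‖ * ‖eU.symm v‖ := U.le_opNorm _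
          _ ≤ (‖(U : X →L[ℂ] X)‖ + 1) * ‖eU.symm v‖ :=
              mul_le_mul_of_nonneg_right (by linarith) (norm_nonneg _)
      constructor
      · have h2 : A * ‖eU.symm v‖ ≤ ‖R (eU.symm v)‖ := (hframe (eU.symm v)).1
        rw [div_mul_eq_mul_div, div_le_iff₀ (by positivity)]
        calc A * ‖v‖ ≤ A * ((‖(U : X →L[ℂ] X)‖ + 1) * ‖eU.symm v‖) :=
              mul_le_mul_of_nonneg_left hv1 hA.le
          _ = (A * ‖eU.symm v‖) * (‖(U : X →L[ℂ] X)‖ + 1) := by ring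
          _ ≤ ‖R (eU.symm v)‖ * (‖(U : X →L[ℂ] X)‖ + 1) :=
              mul_le_mul_of_nonneg_right h2 (by positivity)
      · have h2 : ‖R (eU.symm v)‖ ≤ B * ‖eU.symm v‖ := (hframe (eU.symm v)).2
        have h3 : ‖eU.symm v‖ ≤ ‖S‖ * ‖v‖ := S.le_opNorm v
        calc ‖R (eU.symm v)‖ ≤ B * ‖eU.symm v‖ := h2
          _ ≤ B * (‖S‖ * ‖v‖) := mul_le_mul_of_nonneg_left h3 hB.le
          _ ≤ B * (‖S‖ + 1) * ‖v‖ := by nlinarith [norm_nonneg v, norm_nonneg S]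
    · intro g
      have h1 := ((T : (X →L[ℂ] ℂ) →L[ℂ] (X →L[ℂ] ℂ))).hasSum (hV g)
      have h2 : (T : (X →L[ℂ] ℂ) →L[ℂ] (X →L[ℂ] ℂ)) (V g) = g := hTV g
      rw [h2] at h1
      simpa using h1
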